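/- Let A be an artinian abelian category, B a Serre subcategory, and let C be the full subcategory of the quotient category A/B whose objects are those of ⊥B. Then: (i) the inclusion of C in A/B is an equivalence of categories; (ii) for X, Y ∈ C, Hom_C(X,Y) is the direct limit of Hom_A(X, Y/Y') over subobjects Y' ⊂ Y with Y' ∈ B; (iii) if φ ∈ Hom_C(X,Y) is represented by f ∈ Hom_A(X, Y/Y'), then φ = 0 iff f = 0, φ is a monomorphism iff Ker(f) ∈ B, and φ is an epimorphism iff f is an epimorphism. -/

import Mathlib

open CategoryTheory CategoryTheory.Limits ZeroObject

universe w v u v₂ u₂ v₃ u₃ v₄ u₄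

namespace Paper

/-- An object is artinian if every descending chain of subobjects is stationary. -/
def IsArtinianObj {A : Type u} [Category.{v} A] (X : A) : Prop :=
  ∀ f : ℕ → Subobject X, (∀ n, f (n + 1) ≤ f n) → ∃ N, ∀ n, N ≤ n → f n = f N

/-- An abelian category is artinian if every object is artinian. -/
def IsArtinianCat (A : Type u) [Category.{v} A] : Prop :=
  ∀ X : A, IsArtinianObj X

/-- A Serre subcategory, given as a property of objects: closed under isomorphisms,
subobjects, quotients and extensions, and containing a zero object. -/
structure IsSerreSub {A : Type u} [Category.{v} A] [Abelian A] (P : A → Prop) : Prop where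
  zero : P 0
  of_iso : ∀ {X Y : A}, (X ≅ Y) → P X → P Y
  of_mono : ∀ {X Y : A} (f : X ⟶ Y), Mono f → P Y → P X
  of_epi : ∀ {X Y : A} (f : X ⟶ Y), Epi f → P X → P Y
  of_extension : ∀ (S : ShortComplex A), S.ShortExact → P S.X₁ → P S.X₃ → P S.X₂

/-- The left orthogonal `⊥B` of a class of objects: objects admitting no nonzero
morphism to any object of `B`. -/
def perp {A : Type u} [Category.{v} A] [Abelian A] (P : A → Prop) (X : A) : Prop :=
  ∀ (Y : A), P Y → ∀ f : X ⟶ Y, f = 0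

/-- The pair `(A, B)` satisfies the lifting property if every epimorphism onto an object
of `B` admits a restriction to a subobject lying in `B` which is still an epimorphism. -/
def LiftingProperty {A : Type u} [Category.{v} A] [Abelian A] (P : A → Prop) : Prop :=
  ∀ {X Y : A} (f : X ⟶ Y), Epi f → P Y →
    ∃ (X' : A) (ι : X' ⟶ X), Mono ι ∧ P X' ∧ Epi (ι ≫ f)

/-- The class of morphisms whose kernel and cokernel both lie in `P`; the Gabriel quotient
`A/P` is the localization of `A` at this class of morphisms. -/
def serreW {A : Type u} [Category.{v} A] [Abelian A] (P : A → Prop) : MorphismProperty A :=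
  fun _ _ f => P (kernel f) ∧ P (cokernel f)

/-- The homological dimension of an abelian category, as an element of `ℕ∞`:
the smallest `n` such that `Ext^i(X,Y) = 0` for all objects `X`, `Y` and all `i > n`
(and `∞` if there is no such `n`). -/
noncomputable def homDim (A : Type u) [Category.{v} A] [Abelian A] : ℕ∞ :=
  letI : HasDerivedCategory A := HasDerivedCategory.standard A
  haveI : HasExt.{max u v} A := hasExt_of_hasDerivedCategory A
  sInf {n : ℕ∞ | ∀ (X Y : A) (i : ℕ), n < (i : ℕ∞) → Subsingleton (Abelian.Ext X Y i)}

/-- `n` is an `S`-number: a positive integer all of whose prime factors lie in `S`. -/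
def IsSNumber (S : Set ℕ) (n : ℕ) : Prop :=
  0 < n ∧ ∀ p : ℕ, p.Prime → p ∣ n → p ∈ S

/-- An object is `S`-primary torsion if it is killed by some `S`-number. -/
def STorsionObj (S : Set ℕ) {A : Type u} [Category.{v} A] [Preadditive A] (X : A) : Prop :=
  ∃ n : ℕ, IsSNumber S n ∧ n • (𝟙 X) = 0

/-- The canonical morphism `Y/Y₁ ⟶ Y/Y₂` for subobjects `Y₁ ≤ Y₂` of `Y`. -/
noncomputable def quotMap {A : Type u} [Category.{v} A] [Abelian A] {Y : A}
    {Y₁ Y₂ : Subobject Y} (h : Y₁ ≤ Y₂) :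
    cokernel Y₁.arrow ⟶ cokernel Y₂.arrow :=
  cokernel.desc _ (cokernel.π _)
    (by rw [← Subobject.ofLE_arrow h, Category.assoc, cokernel.condition, comp_zero])

end Paper
namespace Paper

open CategoryTheory CategoryTheory.Limits

section Aux

variable {A : Type u} [Category.{v} A] [Abelian A] {B : A → Prop}

section SerreLemmas

variable (hB : IsSerreSub B)
include hB

lemma mem_of_isZero {X : A} (h : IsZero X) : B X :=
  hB.of_iso h.isoZero.symm hB.zero

lemma mem_ker_of_mono {X Y : A} (f : X ⟶ Y) [Mono f] : B (kernel f) :=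
  mem_of_isZero hB (IsZero.of_iso (isZero_zero A) (kernel.ofMono f))

lemma mem_coker_of_epi {X Y : A} (f : X ⟶ Y) [Epi f] : B (cokernel f) :=
  mem_of_isZero hB (IsZero.of_iso (isZero_zero A) (cokernel.ofEpi f))

/-- `0 → ker v → M → im v → 0` is short exact. -/
lemma ses_left {M N : A} (v : M ⟶ N) :
    (ShortComplex.mk (kernel.ι v) (Abelian.factorThruImage v)
      (by rw [← cancel_mono (Abelian.image.ι v), Category.assoc, Abelian.image.fac,
        kernel.condition, zero_comp])).ShortExact := by
  apply ShortComplex.ShortExact.mk' _ inferInstance inferInstance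
  apply ShortComplex.exact_of_f_is_kernel
  refine KernelFork.IsLimit.ofι' _ _ (fun k hk => ?_)
  have hw : k ≫ v = 0 := by
    rw [← Abelian.image.fac v, ← Category.assoc, hk, zero_comp]
  exact ⟨kernel.lift v k hw, kernel.lift_ι _ _ _⟩

/-- `0 → im v → N → coker v → 0` is short exact. -/
lemma ses_right {M N : A} (v : M ⟶ N) :
    (ShortComplex.mk (Abelian.image.ι v) (cokernel.π v)
      (by rw [← cancel_epi (Abelian.factorThruImage v), ← Category.assoc, Abelian.image.fac,
        cokernel.condition, comp_zero])).ShortExact := by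
  apply ShortComplex.ShortExact.mk' _ inferInstance inferInstance
  apply ShortComplex.exact_of_g_is_cokernel
  refine CokernelCofork.IsColimit.ofπ' _ _ (fun k hk => ?_)
  have hw : v ≫ k = 0 := by
    rw [← Abelian.image.fac v, Category.assoc, hk, comp_zero]
  exact ⟨cokernel.desc v k hw, cokernel.π_desc _ _ _⟩

lemma mem_src {M N : A} (v : M ⟶ N) (h1 : B (kernel v)) (h2 : B N) : B M :=
  hB.of_extension _ (ses_left hB v) h1
    (hB.of_mono (Abelian.image.ι v) inferInstance h2)

lemma mem_tgt {M N : A} (v : M ⟶ N) (h1 : B M) (h2 : B (cokernel v)) : B N :=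
  hB.of_extension _ (ses_right hB v)
    (hB.of_epi (Abelian.factorThruImage v) inferInstance h1) h2

lemma mem_ker_comp {X Y Z : A} (f : X ⟶ Y) (g : Y ⟶ Z)
    (h1 : B (kernel f)) (h2 : B (kernel g)) : B (kernel (f ≫ g)) := by
  have hw : (kernel.ι (f ≫ g) ≫ f) ≫ g = 0 := by
    rw [Category.assoc]; exact kernel.condition _
  let u : kernel (f ≫ g) ⟶ kernel g := kernel.lift g (kernel.ι (f ≫ g) ≫ f) hw
  have hu : u ≫ kernel.ι g = kernel.ι (f ≫ g) ≫ f := kernel.lift_ι _ _ _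
  refine mem_src hB u ?_ h2
  have hj : (kernel.ι u ≫ kernel.ι (f ≫ g)) ≫ f = 0 := by
    have h0 : (kernel.ι u ≫ u) ≫ kernel.ι g = 0 := by
      rw [kernel.condition, zero_comp]
    rw [Category.assoc, hu] at h0
    rw [Category.assoc]; exact h0
  let j : kernel u ⟶ kernel f := kernel.lift f _ hj
  have hjfac : j ≫ kernel.ι f = kernel.ι u ≫ kernel.ι (f ≫ g) := kernel.lift_ι _ _ _
  exact hB.of_mono j (mono_of_mono_fac hjfac) h1

lemma mem_coker_comp {X Y Z : A} (f : X ⟶ Y) (g : Y ⟶ Z)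
    (h1 : B (cokernel f)) (h2 : B (cokernel g)) : B (cokernel (f ≫ g)) := by
  have hw : f ≫ g ≫ cokernel.π (f ≫ g) = 0 := by
    rw [← Category.assoc]; exact cokernel.condition _
  let d : cokernel f ⟶ cokernel (f ≫ g) := cokernel.desc f (g ≫ cokernel.π (f ≫ g)) hw
  have hd : cokernel.π f ≫ d = g ≫ cokernel.π (f ≫ g) := cokernel.π_desc _ _ _
  refine mem_tgt hB d h1 ?_
  have hcw : g ≫ cokernel.π (f ≫ g) ≫ cokernel.π d = 0 := by
    have h0 : cokernel.π f ≫ d ≫ cokernel.π d = 0 := by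
      rw [cokernel.condition, comp_zero]
    rw [← Category.assoc, hd, Category.assoc] at h0
    exact h0
  let c : cokernel g ⟶ cokernel d := cokernel.desc g _ hcw
  have hcfac : cokernel.π g ≫ c = cokernel.π (f ≫ g) ≫ cokernel.π d := cokernel.π_desc _ _ _
  have hce : Epi (cokernel.π g ≫ c) := by rw [hcfac]; exact epi_comp _ _
  exact hB.of_epi c (epi_of_epi (cokernel.π g) c) h2

end SerreLemmas

section Calculus

variable (hB : IsSerreSub B)
include hB

lemma serreW_id (X : A) : serreW B (𝟙 X) :=
  ⟨mem_ker_of_mono hB _, mem_coker_of_epi hB _⟩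

lemma serreW_comp {X Y Z : A} {f : X ⟶ Y} {g : Y ⟶ Z}
    (hf : serreW B f) (hg : serreW B g) : serreW B (f ≫ g) :=
  ⟨mem_ker_comp hB f g hf.1 hg.1, mem_coker_comp hB f g hf.2 hg.2⟩

lemma isMultiplicative : (serreW B).IsMultiplicative where
  id_mem := serreW_id hB
  comp_mem _ _ hf hg := serreW_comp hB hf hg

omit hB in
/-- The cokernel of `pushout.inr` is isomorphic to the cokernel of the parallel morphism. -/
noncomputable def pushoutInrCokernelIso {X' X T : A} (m : X' ⟶ X) (g1 : X' ⟶ T) :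
    cokernel m ≅ cokernel (pushout.inr m g1) where
  hom := cokernel.desc m (pushout.inl m g1 ≫ cokernel.π _)
    (by rw [← Category.assoc, pushout.condition, Category.assoc, cokernel.condition, comp_zero])
  inv := cokernel.desc _ (pushout.desc (cokernel.π m) 0 (by simp))
    (by rw [pushout.inr_desc])
  hom_inv_id := by
    apply coequalizer.hom_ext
    simp only [cokernel.π_desc_assoc, Category.assoc, Category.comp_id]
    rw [cokernel.π_desc]
    exact pushout.inl_desc _ _ _
  inv_hom_id := by
    apply coequalizer.hom_ext
    apply pushout.hom_ext
    · simp only [cokernel.π_desc_assoc, Category.comp_id]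
      rw [pushout.inl_desc_assoc, cokernel.π_desc]
    · simp only [cokernel.π_desc_assoc, Category.comp_id]
      rw [pushout.inr_desc_assoc, zero_comp, cokernel.condition]

lemma hasLeftCalc : (serreW B).HasLeftCalculusOfFractions where
  toIsMultiplicative := isMultiplicative hB
  exists_leftFraction X Y φ := by
    obtain ⟨hks, hcs⟩ := φ.hs
    set e := Abelian.factorThruImage φ.s with he
    set m := Abelian.image.ι φ.s with hm
    have hem : e ≫ m = φ.s := Abelian.image.fac φ.s
    have hkere : B (kernel e) := by
      have hw : kernel.ι e ≫ φ.s = 0 := by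
        have h0 : kernel.ι e ≫ e ≫ m = 0 := by
          rw [← Category.assoc, kernel.condition, zero_comp]
        rw [hem] at h0; exact h0
      exact hB.of_mono _ (mono_of_mono_fac (kernel.lift_ι φ.s (kernel.ι e) hw)) hks
    set h1 : kernel e ⟶ Y := kernel.ι e ≫ φ.f with hh1
    set t1 := cokernel.π h1 with ht1
    have hwt : kernel.ι e ≫ (φ.f ≫ t1) = 0 := by
      rw [← Category.assoc]; exact cokernel.condition h1
    set g1 : Abelian.image φ.s ⟶ cokernel h1 := Abelian.epiDesc e (φ.f ≫ t1) hwt with hg1def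
    have hg1 : e ≫ g1 = φ.f ≫ t1 := Abelian.comp_epiDesc e (φ.f ≫ t1) hwt
    have hWt1 : serreW B t1 := by
      constructor
      · exact hB.of_epi (Abelian.factorThruImage h1) inferInstance hkere
      · exact mem_coker_of_epi hB t1
    have hcm : B (cokernel m) :=
      hB.of_iso (cokernelIsoOfEq hem.symm ≪≫ cokernelEpiComp e m) hcs
    have hWinr : serreW B (pushout.inr m g1) := by
      constructor
      · exact mem_ker_of_mono hB _
      · exact hB.of_iso (pushoutInrCokernelIso m g1) hcm
    refine ⟨⟨pushout.inl m g1, t1 ≫ pushout.inr m g1,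
      serreW_comp hB hWt1 hWinr⟩, ?_⟩
    calc φ.f ≫ t1 ≫ pushout.inr m g1
        = (φ.f ≫ t1) ≫ pushout.inr m g1 := by rw [Category.assoc]
      _ = (e ≫ g1) ≫ pushout.inr m g1 := by rw [hg1]
      _ = e ≫ m ≫ pushout.inl m g1 := by rw [Category.assoc, pushout.condition]
      _ = (e ≫ m) ≫ pushout.inl m g1 := by rw [Category.assoc]
      _ = φ.s ≫ pushout.inl m g1 := by rw [hem]
  ext X' X Y f₁ f₂ s hs hsf := by
    have hsh : s ≫ (f₁ - f₂) = 0 := by rw [Preadditive.comp_sub, hsf, sub_self]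
    set h : X ⟶ Y := f₁ - f₂ with hh
    set h' : cokernel s ⟶ Y := cokernel.desc s h hsh with hh'
    have hπh' : cokernel.π s ≫ h' = h := cokernel.π_desc _ _ _
    refine ⟨cokernel h, cokernel.π h, ⟨?_, mem_coker_of_epi hB _⟩, ?_⟩
    · have hw : h' ≫ cokernel.π h = 0 := by
        rw [← cancel_epi (cokernel.π s), ← Category.assoc, hπh', cokernel.condition, comp_zero]
      set ϕ := kernel.lift (cokernel.π h) h' hw with hϕ
      have hϕι : ϕ ≫ kernel.ι (cokernel.π h) = h' := kernel.lift_ι _ _ _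
      have hfac : cokernel.π s ≫ ϕ = Abelian.factorThruImage h := by
        rw [← cancel_mono (kernel.ι (cokernel.π h)), Category.assoc, hϕι, hπh']
        exact (Abelian.image.fac h).symm
      have hϕepi : Epi ϕ := by
        have : Epi (cokernel.π s ≫ ϕ) := by rw [hfac]; infer_instance
        exact epi_of_epi (cokernel.π s) ϕ
      exact hB.of_epi ϕ hϕepi hs.2
    · have hc := cokernel.condition h
      rw [hh, Preadditive.sub_comp] at hc
      exact sub_eq_zero.mp hc

end Calculus

section Minimal

lemma exists_minimal_subobject {X₀ : A} (hart : IsArtinianObj X₀)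
    (S : Set (Subobject X₀)) {T : Subobject X₀} (hT : T ∈ S) :
    ∃ M ∈ S, ∀ K ∈ S, K ≤ M → K = M := by
  by_contra hc
  push_neg at hc
  -- hc : ∀ M ∈ S, ∃ K ∈ S, K ≤ M ∧ K ≠ M
  have step : ∀ p : {M : Subobject X₀ // M ∈ S}, {K : Subobject X₀ // K ∈ S ∧ K ≤ p.1 ∧ K ≠ p.1} :=
    fun p => ⟨(hc p.1 p.2).choose, (hc p.1 p.2).choose_spec.1,
      (hc p.1 p.2).choose_spec.2.1, (hc p.1 p.2).choose_spec.2.2⟩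
  let F : ℕ → {M : Subobject X₀ // M ∈ S} := fun n =>
    Nat.rec ⟨T, hT⟩ (fun _ p => ⟨(step p).1, (step p).2.1⟩) n
  have hdesc : ∀ n, (F (n + 1)).1 ≤ (F n).1 := fun n => (step (F n)).2.2.1
  obtain ⟨N, hN⟩ := hart (fun n => (F n).1) hdesc
  exact (step (F N)).2.2.2 (hN (N + 1) (Nat.le_succ N))

end Minimal

section Localization

variable (hB : IsSerreSub B)
variable {D : Type u₂} [Category.{v₂} D] [Abelian D] (Q : A ⥤ D)
  [Q.IsLocalization (serreW B)] [Q.PreservesZeroMorphisms]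

include hB

lemma isZero_Q_obj_of_mem {Z : A} (hZ : B Z) : IsZero (Q.obj Z) := by
  have hW : serreW B (0 : Z ⟶ (0 : A)) := by
    constructor
    · exact hB.of_iso kernelZeroIsoSource.symm hZ
    · exact hB.of_epi (cokernel.π _) inferInstance hB.zero
  haveI := Localization.inverts Q (serreW B) _ hW
  exact IsZero.of_iso (Q.map_isZero (isZero_zero A)) (asIso (Q.map (0 : Z ⟶ (0 : A))))

lemma mem_of_isZero_Q_obj [(serreW B).HasLeftCalculusOfFractions]
    {Z : A} (hZ : IsZero (Q.obj Z)) : B Z := by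
  have h : Q.map (𝟙 Z) = Q.map 0 := hZ.eq_of_src _ _
  rw [MorphismProperty.map_eq_iff_postcomp Q (serreW B)] at h
  obtain ⟨T, s, hs, he⟩ := h
  simp only [Category.id_comp, zero_comp] at he
  rw [he] at hs
  exact hB.of_iso kernelZeroIsoSource hs.1

lemma mem_iff_isZero_Q_obj [(serreW B).HasLeftCalculusOfFractions]
    {Z : A} : B Z ↔ IsZero (Q.obj Z) :=
  ⟨isZero_Q_obj_of_mem hB Q, mem_of_isZero_Q_obj hB Q⟩

omit hB in
lemma Q_map_eq_of_perp [(serreW B).HasLeftCalculusOfFractions]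
    {X Z : A} (hX : perp B X) {h h' : X ⟶ Z} (hQ : Q.map h = Q.map h') : h = h' := by
  rw [MorphismProperty.map_eq_iff_postcomp Q (serreW B)] at hQ
  obtain ⟨T, s, hs, he⟩ := hQ
  have h0 : (h - h') ≫ s = 0 := by rw [Preadditive.sub_comp, he, sub_self]
  have hl : kernel.lift s (h - h') h0 ≫ kernel.ι s = h - h' := kernel.lift_ι _ _ _
  have hz : kernel.lift s (h - h') h0 = 0 := hX (kernel s) hs.1 _
  rw [hz, zero_comp] at hl
  exact sub_eq_zero.mp hl.symm

/-- `Q` inverts `cokernel.π Y'.arrow` for `Y' ∈ B`. -/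
lemma serreW_cokernel_π {Y : A} (Y' : Subobject Y) (hY' : B (Y' : A)) :
    serreW B (cokernel.π Y'.arrow) := by
  constructor
  · exact hB.of_iso (Abelian.imageIsoImage Y'.arrow ≪≫ imageMonoIsoSource Y'.arrow).symm hY'
  · exact mem_coker_of_epi hB _

end Localization

section Perp

lemma perp_of_epi {X Z : A} (hX : perp B X) {e : X ⟶ Z} (he : Epi e) : perp B Z := by
  intro T hT f
  have : e ≫ f = 0 := hX T hT (e ≫ f)
  rw [← cancel_epi e, this, comp_zero]

end Perp


end Aux


/-- **Statement 9.** Let `A` be an artinian abelian category, `B` a Serre subcategory, and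
realize the Gabriel quotient `A/B` as an abelian category `D` with an exact localization
functor `Q : A ⥤ D` at the morphisms with kernel and cokernel in `B`. Then:
(i) the full subcategory of `A/B` on the objects of `⊥B` is equivalent to `A/B`
(i.e. every object of `A/B` is isomorphic to the image of an object of `⊥B`);
(ii) for `X, Y ∈ ⊥B`, `Hom_{A/B}(X, Y)` is the direct limit of `Hom_A(X, Y/Y')` over the
subobjects `Y' ⊆ Y` lying in `B` (expressed below as: every `g : Q(X) ⟶ Q(Y)` is of the
form `Q(f) ≫ Q(π_{Y'})⁻¹` for some such `Y'` and `f : X ⟶ Y/Y'`, and two representatives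
with the same image agree after passing to a larger `Y''`);
(iii) if `φ : Q(X) ⟶ Q(Y)` is represented by `f : X ⟶ Y/Y'`, then `φ = 0` iff `f = 0`,
`φ` is a monomorphism iff `Ker f ∈ B`, and `φ` is an epimorphism iff `f` is one. -/
theorem quotient_category_hom_description
    (A : Type u) [Category.{v} A] [Abelian A] (hA : IsArtinianCat A)
    (B : A → Prop) (hB : IsSerreSub B)
    (D : Type u₂) [Category.{v₂} D] [Abelian D] (Q : A ⥤ D)
    [Q.IsLocalization (serreW B)]
    [PreservesFiniteLimits Q] [PreservesFiniteColimits Q] :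
    (∀ d : D, ∃ X : A, perp B X ∧ Nonempty (d ≅ Q.obj X)) ∧
    (∀ X Y : A, perp B X → perp B Y →
      (∀ g : Q.obj X ⟶ Q.obj Y, ∃ Y' : Subobject Y, B (Y' : A) ∧
        ∃ f : X ⟶ cokernel Y'.arrow, Q.map f = g ≫ Q.map (cokernel.π Y'.arrow)) ∧
      (∀ (Y₁ Y₂ : Subobject Y), B (Y₁ : A) → B (Y₂ : A) →
        ∀ (f₁ : X ⟶ cokernel Y₁.arrow) (f₂ : X ⟶ cokernel Y₂.arrow)
          (g : Q.obj X ⟶ Q.obj Y),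
          Q.map f₁ = g ≫ Q.map (cokernel.π Y₁.arrow) →
          Q.map f₂ = g ≫ Q.map (cokernel.π Y₂.arrow) →
          ∃ (Y₃ : Subobject Y) (h₁ : Y₁ ≤ Y₃) (h₂ : Y₂ ≤ Y₃), B (Y₃ : A) ∧
            f₁ ≫ quotMap h₁ = f₂ ≫ quotMap h₂)) ∧
    (∀ X Y : A, perp B X → perp B Y → ∀ Y' : Subobject Y, B (Y' : A) →
      ∀ (f : X ⟶ cokernel Y'.arrow) (g : Q.obj X ⟶ Q.obj Y),
        Q.map f = g ≫ Q.map (cokernel.π Y'.arrow) →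
        ((g = 0 ↔ f = 0) ∧ (Mono g ↔ B (kernel f)) ∧ (Epi g ↔ Epi f))) := by
  haveI hcalc : (serreW B).HasLeftCalculusOfFractions := hasLeftCalc hB
  haveI hQzero : Q.PreservesZeroMorphisms := inferInstance
  have hinv := Localization.inverts Q (serreW B)
  refine ⟨?_, ?_, ?_⟩
  · -- Part (i)
    intro d
    haveI : Q.EssSurj := Localization.essSurj Q (serreW B)
    set X₀ := Q.objPreimage d with hX₀
    have e₀ : Q.obj X₀ ≅ d := Q.objObjPreimageIso d
    set S : Set (Subobject X₀) := {M | B ((cokernel M.arrow : A))} with hS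
    have htop : (⊤ : Subobject X₀) ∈ S := mem_coker_of_epi hB _
    obtain ⟨M, hM, hmin⟩ := exists_minimal_subobject (hA X₀) S htop
    have hperp : perp B (M : A) := by
      intro T hT φ
      haveI : Mono (kernel.ι φ ≫ M.arrow) := mono_comp _ _
      set K' : Subobject X₀ := Subobject.mk (kernel.ι φ ≫ M.arrow) with hK'
      have harr : (Subobject.underlyingIso (kernel.ι φ ≫ M.arrow)).hom ≫
          (kernel.ι φ ≫ M.arrow) = K'.arrow :=
        Subobject.underlyingIso_hom_comp_eq_mk _
      have hK'S : K' ∈ S := by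
        have h1 : B (cokernel (kernel.ι φ)) :=
          hB.of_mono (Abelian.factorThruCoimage φ) inferInstance hT
        have h2 : B (cokernel (kernel.ι φ ≫ M.arrow)) := mem_coker_comp hB _ _ h1 hM
        exact hB.of_iso ((cokernelEpiComp _ _).symm ≪≫ cokernelIsoOfEq harr) h2
      have hle : K' ≤ M := Subobject.mk_le_of_comm (kernel.ι φ) rfl
      have heq : K' = M := hmin K' hK'S hle
      have hge : M ≤ K' := le_of_eq heq.symm
      set t : (M : A) ⟶ kernel φ :=
        Subobject.ofLE M K' hge ≫ (Subobject.underlyingIso (kernel.ι φ ≫ M.arrow)).hom with htdef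
      have ht : (t ≫ kernel.ι φ) ≫ M.arrow = 𝟙 (M : A) ≫ M.arrow := by
        rw [Category.id_comp, Category.assoc, htdef, Category.assoc, harr,
          Subobject.ofLE_arrow]
      have htk : t ≫ kernel.ι φ = 𝟙 (M : A) := by rwa [cancel_mono M.arrow] at ht
      haveI : IsSplitEpi (kernel.ι φ) := IsSplitEpi.mk' ⟨t, htk⟩
      rw [← cancel_epi (kernel.ι φ), kernel.condition, comp_zero]
    haveI := hinv _ ⟨mem_ker_of_mono hB M.arrow, hM⟩
    exact ⟨(M : A), hperp, ⟨e₀.symm ≪≫ (asIso (Q.map M.arrow)).symm⟩⟩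
  · -- Part (ii)
    intro X Y hX hY
    constructor
    · -- existence of representatives
      intro g
      obtain ⟨φ, hφ⟩ := Localization.exists_leftFraction Q (serreW B) g
      obtain ⟨hks, hcs⟩ := φ.hs
      have hfac : g ≫ Q.map φ.s = Q.map φ.f := by
        rw [hφ]; exact MorphismProperty.LeftFraction.map_comp_map_s φ Q hinv
      refine ⟨Subobject.mk (kernel.ι φ.s),
        hB.of_iso (Subobject.underlyingIso _).symm hks, ?_⟩
      set Y' : Subobject Y := Subobject.mk (kernel.ι φ.s) with hY'def
      set π' := cokernel.π Y'.arrow with hπ'def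
      have hf'0 : φ.f ≫ cokernel.π φ.s = 0 := hX _ hcs _
      set f₀ : X ⟶ Abelian.image φ.s := kernel.lift (cokernel.π φ.s) φ.f hf'0 with hf₀def
      have hf₀ : f₀ ≫ Abelian.image.ι φ.s = φ.f := kernel.lift_ι _ _ _
      have harr : (Subobject.underlyingIso (kernel.ι φ.s)).hom ≫ kernel.ι φ.s = Y'.arrow :=
        Subobject.underlyingIso_hom_comp_eq_mk _
      set isoA : cokernel Y'.arrow ≅ Abelian.coimage φ.s :=
        (cokernelIsoOfEq harr).symm ≪≫ cokernelEpiComp _ _ with hisoA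
      have hkey : π' ≫ isoA.hom = Abelian.coimage.π φ.s := by
        rw [hisoA, hπ'def]
        simp [cokernelEpiComp]
      set c : Abelian.image φ.s ⟶ cokernel Y'.arrow :=
        inv (Abelian.coimageImageComparison φ.s) ≫ isoA.inv with hcdef
      set big : cokernel Y'.arrow ⟶ φ.Y' :=
        isoA.hom ≫ Abelian.coimageImageComparison φ.s ≫ Abelian.image.ι φ.s with hbigdef
      have hWι : serreW B (Abelian.image.ι φ.s) := by
        constructor
        · exact mem_ker_of_mono hB _
        · exact hB.of_iso
            (cokernelIsoOfEq (Abelian.image.fac φ.s).symm ≪≫ cokernelEpiComp _ _) hcs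
      haveI := hinv _ hWι
      haveI : IsIso (Q.map big) := by
        rw [hbigdef, Q.map_comp, Q.map_comp]
        infer_instance
      have key2 : π' ≫ big = φ.s := by
        rw [hbigdef, ← Category.assoc, hkey]
        exact Abelian.coimage_image_factorisation φ.s
      have key3 : (f₀ ≫ c) ≫ big = φ.f := by
        rw [hbigdef, hcdef]
        simp [hf₀]
      refine ⟨f₀ ≫ c, ?_⟩
      rw [← cancel_mono (Q.map big), ← Q.map_comp, key3, Category.assoc, ← Q.map_comp,
        key2, hfac]
    · -- uniqueness of representatives
      intro Y₁ Y₂ hY₁ hY₂ f₁ f₂ g hg₁ hg₂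
      set w : ((Y₁ : A) ⊞ (Y₂ : A)) ⟶ Y := biprod.desc Y₁.arrow Y₂.arrow with hwdef
      have hw1 : biprod.inl ≫ w = Y₁.arrow := biprod.inl_desc _ _
      have hw2 : biprod.inr ≫ w = Y₂.arrow := biprod.inr_desc _ _
      have hbi : B ((Y₁ : A) ⊞ (Y₂ : A)) := by
        refine hB.of_extension (ShortComplex.mk (biprod.inl : (Y₁ : A) ⟶ _)
          (biprod.snd : _ ⟶ (Y₂ : A)) (by simp)) ?_ hY₁ hY₂
        exact ShortComplex.ShortExact.mk'
          (ShortComplex.Splitting.ofHasBinaryBiproduct _ _).exact inferInstance inferInstance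
      have h₁ : Y₁ ≤ Subobject.mk (Abelian.image.ι w) :=
        Subobject.le_mk_of_comm (biprod.inl ≫ Abelian.factorThruImage w)
          (by rw [Category.assoc, Abelian.image.fac, hw1])
      have h₂ : Y₂ ≤ Subobject.mk (Abelian.image.ι w) :=
        Subobject.le_mk_of_comm (biprod.inr ≫ Abelian.factorThruImage w)
          (by rw [Category.assoc, Abelian.image.fac, hw2])
      refine ⟨Subobject.mk (Abelian.image.ι w), h₁, h₂, hB.of_iso
        (Subobject.underlyingIso _).symm
        (hB.of_epi (Abelian.factorThruImage w) inferInstance hbi), ?_⟩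
      apply Q_map_eq_of_perp Q hX
      have e₁ : cokernel.π Y₁.arrow ≫ quotMap h₁ =
          cokernel.π (Subobject.mk (Abelian.image.ι w)).arrow := cokernel.π_desc _ _ _
      have e₂ : cokernel.π Y₂.arrow ≫ quotMap h₂ =
          cokernel.π (Subobject.mk (Abelian.image.ι w)).arrow := cokernel.π_desc _ _ _
      rw [Q.map_comp, Q.map_comp, hg₁, hg₂, Category.assoc, Category.assoc,
        ← Q.map_comp, ← Q.map_comp, e₁, e₂]
  · -- Part (iii)
    intro X Y hX hY Y' hY' f g hQf
    have hW : serreW B (cokernel.π Y'.arrow) := serreW_cokernel_π hB Y' hY'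
    haveI := hinv _ hW
    refine ⟨⟨?_, ?_⟩, ?_, ?_⟩
    · intro h0
      apply Q_map_eq_of_perp Q hX (h := f) (h' := 0)
      rw [hQf, h0, zero_comp, Q.map_zero]
    · intro h0
      rw [← cancel_mono (Q.map (cokernel.π Y'.arrow)), ← hQf, h0, Q.map_zero, zero_comp]
    · -- Mono g ↔ B (kernel f)
      have hmono : Mono g ↔ Mono (Q.map f) := by
        constructor
        · intro hg; rw [hQf]; exact mono_comp _ _
        · intro hg
          have : Mono (g ≫ Q.map (cokernel.π Y'.arrow)) := hQf ▸ hg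
          exact mono_of_mono g (Q.map (cokernel.π Y'.arrow))
      have hker : Mono (Q.map f) ↔ IsZero (Q.obj (kernel f)) := by
        constructor
        · intro h
          have hι : kernel.ι (Q.map f) = 0 := by
            rw [← cancel_mono (Q.map f), kernel.condition, zero_comp]
          exact IsZero.of_iso (IsZero.of_mono_eq_zero _ hι) (PreservesKernel.iso Q f)
        · intro h
          exact Abelian.mono_of_kernel_ι_eq_zero _
            ((IsZero.of_iso h (PreservesKernel.iso Q f).symm).eq_of_src _ _)
      rw [hmono, hker, ← mem_iff_isZero_Q_obj hB Q]
    · -- Epi g ↔ Epi f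
      have hepi : Epi g ↔ Epi (Q.map f) := by
        constructor
        · intro hg; rw [hQf]; exact epi_comp _ _
        · intro hg
          have hg' : g = Q.map f ≫ inv (Q.map (cokernel.π Y'.arrow)) := by
            rw [hQf, Category.assoc, IsIso.hom_inv_id, Category.comp_id]
          rw [hg']; exact epi_comp _ _
      have hcoker : Epi (Q.map f) ↔ IsZero (Q.obj (cokernel f)) := by
        constructor
        · intro h
          have hπ : cokernel.π (Q.map f) = 0 := by
            rw [← cancel_epi (Q.map f), cokernel.condition, comp_zero]
          exact IsZero.of_iso (IsZero.of_epi_eq_zero _ hπ) (PreservesCokernel.iso Q f)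
        · intro h
          exact Abelian.epi_of_cokernel_π_eq_zero _
            ((IsZero.of_iso h (PreservesCokernel.iso Q f).symm).eq_of_tgt _ _)
      have hBiff : B (cokernel f) ↔ Epi f := by
        constructor
        · intro hc
          have hp1 : perp B (cokernel Y'.arrow) :=
            perp_of_epi hY (e := cokernel.π Y'.arrow) inferInstance
          have hp2 : perp B (cokernel f) := perp_of_epi hp1 (e := cokernel.π f) inferInstance
          have hz : IsZero (cokernel f) :=
            IsZero.of_mono_eq_zero (𝟙 _) (hp2 _ hc (𝟙 _))
          exact Abelian.epi_of_cokernel_π_eq_zero _ (hz.eq_of_tgt _ _)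
        · intro he; exact mem_coker_of_epi hB _
      rw [hepi, hcoker, ← mem_iff_isZero_Q_obj hB Q, hBiff]


end Paper
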